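/- n-step cut-off under-approximation (finite-horizon form of the paper's Lemma on under-approximative value functions): in a POMDP with reward function R and observable goal set G, for every observation-based policy σ, every n ∈ ℕ, and every belief b over S with an observation, ∑_{s∈S} b(s)·W_n^σ(s) ≤ V_n(b). -/

import Mathlib

open Finset

attribute [local instance] Classical.propDecidable

noncomputable section

/-- A belief over a finite type `S`: a nonnegative function summing to one. -/
def IsBelief {S : Type} [Fintype S] (b : S → ℝ) : Prop :=
  (∀ s, 0 ≤ b s) ∧ (∑ s, b s = 1)

/-- A belief clip for a belief `b`: `0 ≤ μ(s) ≤ b(s)` pointwise and `Σμ < 1`. -/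
def IsBeliefClip {S : Type} [Fintype S] (b μ : S → ℝ) : Prop :=
  (∀ s, 0 ≤ μ s ∧ μ s ≤ b s) ∧ (∑ s, μ s < 1)

/-- The induced function `b ⊖ μ`, defined by `(b ⊖ μ)(s) = (b(s) − μ(s)) / (1 − Σμ)`. -/
def clipped {S : Type} [Fintype S] (b μ : S → ℝ) : S → ℝ :=
  fun s => (b s - μ s) / (1 - ∑ s', μ s')

variable {S Act Z : Type}

/-- The set of actions enabled in state `s`: those whose outgoing probabilities sum to 1. -/
def enabledA [Fintype S] [Fintype Act] (P : S → Act → S → ℝ) (s : S) : Finset Act :=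
  univ.filter fun α => ∑ s' : S, P s α s' = 1

/-- The actions enabled at an observation `z`: `Act(z) = Act(s)` for some `s` with `O s = z`. -/
def obsEnabled [Fintype S] [Fintype Act] (O : S → Z) (P : S → Act → S → ℝ) (z : Z) :
    Finset Act :=
  if h : ∃ s, O s = z then enabledA P h.choose else ∅

/-- The POMDP assumptions on the observation function `O` and the transition function `P`:
nonnegative transition probabilities, each state-action row sums to 0 or 1, every state has
some enabled action, and equally-observed states have equal enabled actions. -/
def IsPOMDP [Fintype S] [Fintype Act] (O : S → Z) (P : S → Act → S → ℝ) : Prop :=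
  (∀ s α s', 0 ≤ P s α s') ∧
  (∀ s α, (∑ s', P s α s') = 0 ∨ (∑ s', P s α s') = 1) ∧
  (∀ s, (enabledA P s).Nonempty) ∧
  (∀ s s', O s = O s' → enabledA P s = enabledA P s')

/-- `b` has observation `z`: the support of `b` is contained in `O⁻¹(z)`. -/
def HasObs (O : S → Z) (b : S → ℝ) (z : Z) : Prop :=
  ∀ s, 0 < b s → O s = z

/-- `P(s,α,z)`: probability to observe `z` after taking `α` in state `s`. -/
def Pso [Fintype S] (O : S → Z) (P : S → Act → S → ℝ) (s : S) (α : Act) (z : Z) : ℝ :=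
  ∑ s' : S, if O s' = z then P s α s' else 0

/-- `P(b,α,z)`: probability to observe `z` after taking `α` in belief `b`. -/
def Pbo [Fintype S] (O : S → Z) (P : S → Act → S → ℝ) (b : S → ℝ) (α : Act) (z : Z) : ℝ :=
  ∑ s : S, b s * Pso O P s α z

/-- The successor belief `⟦b|α,z⟧`. -/
def succB [Fintype S] (O : S → Z) (P : S → Act → S → ℝ) (b : S → ℝ) (α : Act) (z : Z) :
    S → ℝ :=
  fun s => if O s = z then (∑ s' : S, b s' * P s' α s) / Pbo O P b α z else 0

/-- The belief reward `R(b,α,z)`. -/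
def Rbel [Fintype S] (O : S → Z) (P R : S → Act → S → ℝ) (b : S → ℝ) (α : Act) (z : Z) : ℝ :=
  (∑ s : S, b s * ∑ s' : S, if O s' = z then R s α s' * P s α s' else 0) / Pbo O P b α z

/-- The last observation of a finite observation trace `z₀ α₁ z₁ … αₙ zₙ`,
represented as the pair of `z₀` and the list `[(α₁,z₁),…,(αₙ,zₙ)]`. -/
def lastObs (τ : Z × List (Act × Z)) : Z :=
  (τ.2.getLast?.map Prod.snd).getD τ.1

/-- An observation-based policy: to each finite observation trace it assigns a probability
distribution over actions supported on the actions enabled at the last observation. -/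
def IsObsPolicy [Fintype S] [Fintype Act] (O : S → Z) (P : S → Act → S → ℝ)
    (σ : Z × List (Act × Z) → Act → ℝ) : Prop :=
  ∀ τ, (∀ α, 0 ≤ σ τ α) ∧ (∑ α, σ τ α = 1) ∧
    (∀ α, σ τ α ≠ 0 → ∀ s, O s = lastObs τ → α ∈ enabledA P s)

/-- The shifted policy `σ⇝(z,α)`, behaving as `σ` after observing `z` and taking `α`. -/
def shiftPol (σ : Z × List (Act × Z) → Act → ℝ) (z : Z) (α : Act) :
    Z × List (Act × Z) → Act → ℝ :=
  fun τ => σ (z, (α, τ.1) :: τ.2)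

/-- Goal states are observable: membership in `G` is determined by the observation. -/
def ObservableGoal (O : S → Z) (G : Set S) : Prop :=
  ∃ Z' : Set Z, ∀ s, s ∈ G ↔ O s ∈ Z'

/-- The `n`-step state values `W_n^σ` under an observation-based policy `σ`. -/
def Wval [Fintype S] [Fintype Act] (O : S → Z) (P R : S → Act → S → ℝ) (G : Set S) :
    ℕ → (Z × List (Act × Z) → Act → ℝ) → S → ℝ
  | 0, _, _ => 0
  | n+1, σ, s =>
    if s ∈ G then 0
    else ∑ α ∈ enabledA P s, σ (O s, []) α *
      ∑ s' : S, P s α s' * (R s α s' + Wval O P R G n (shiftPol σ (O s) α) s')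

/-- The `n`-step belief values `V_n^σ(b)` under policy `σ`, for a belief `b` with
observation `z`. -/
def Vpol [Fintype S] [Fintype Act] [Fintype Z] (O : S → Z) (P R : S → Act → S → ℝ)
    (G : Set S) :
    ℕ → (Z × List (Act × Z) → Act → ℝ) → (S → ℝ) → Z → ℝ
  | 0, _, _, _ => 0
  | n+1, σ, b, z =>
    if ∀ s, 0 < b s → s ∈ G then 0
    else ∑ α ∈ obsEnabled O P z, σ (z, []) α *
      ∑ z' ∈ univ.filter (fun z' => 0 < Pbo O P b α z'),
        Pbo O P b α z' *
          (Rbel O P R b α z' + Vpol O P R G n (shiftPol σ z α) (succB O P b α z') z')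

/-- Maximum of `f` over a finite set (0 for the empty set). -/
def maxOver {α : Type} (t : Finset α) (f : α → ℝ) : ℝ :=
  if h : t.Nonempty then t.sup' h f else 0

/-- Minimum of `f` over a finite set (0 for the empty set). -/
def minOver {α : Type} (t : Finset α) (f : α → ℝ) : ℝ :=
  if h : t.Nonempty then t.inf' h f else 0

/-- The `n`-step optimal belief values `V_n(b)`, for a belief `b` with observation `z`. -/
def Vopt [Fintype S] [Fintype Act] [Fintype Z] (O : S → Z) (P R : S → Act → S → ℝ)
    (G : Set S) :
    ℕ → (S → ℝ) → Z → ℝ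
  | 0, _, _ => 0
  | n+1, b, z =>
    if ∀ s, 0 < b s → s ∈ G then 0
    else maxOver (obsEnabled O P z) fun α =>
      ∑ z' ∈ univ.filter (fun z' => 0 < Pbo O P b α z'),
        Pbo O P b α z' * (Rbel O P R b α z' + Vopt O P R G n (succB O P b α z') z')

/-- The `n`-step minimal values `U_n` on the underlying fully observable MDP. -/
def Umin [Fintype S] [Fintype Act] (P R : S → Act → S → ℝ) (G : Set S) : ℕ → S → ℝ
  | 0, _ => 0
  | n+1, s =>
    if s ∈ G then 0
    else minOver (enabledA P s) fun α =>
      ∑ s' : S, P s α s' * (R s α s' + Umin P R G n s')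

end



section myhelpers
open Finset
variable {S Act Z : Type} [Fintype S] [Fintype Act] [Fintype Z]

lemma myPso_nonneg (O : S → Z) (P : S → Act → S → ℝ) (hP : ∀ s α s', 0 ≤ P s α s')
    (s : S) (α : Act) (z : Z) : 0 ≤ Pso O P s α z := by
  unfold Pso
  apply Finset.sum_nonneg
  intro s' _
  split_ifs
  · exact hP s α s'
  · exact le_rfl

lemma myPbo_nonneg (O : S → Z) (P : S → Act → S → ℝ) (hP : ∀ s α s', 0 ≤ P s α s')
    (b : S → ℝ) (hb : ∀ s, 0 ≤ b s) (α : Act) (z : Z) : 0 ≤ Pbo O P b α z := by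
  unfold Pbo
  exact Finset.sum_nonneg fun s _ => mul_nonneg (hb s) (myPso_nonneg O P hP s α z)

lemma myLastObs_cons (z : Z) (α : Act) (τ : Z × List (Act × Z)) :
    lastObs (z, (α, τ.1) :: τ.2) = lastObs τ := by
  obtain ⟨z0, l⟩ := τ
  cases l with
  | nil => simp [lastObs]
  | cons h t =>
    simp only [lastObs, List.getLast?_cons_cons]
    obtain ⟨x, hx⟩ := Option.isSome_iff_exists.mp
      (List.getLast?_isSome.mpr (List.cons_ne_nil h t))
    rw [hx]
    rfl

lemma myShiftPol_isPolicy (O : S → Z) (P : S → Act → S → ℝ)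
    (σ : Z × List (Act × Z) → Act → ℝ) (hσ : IsObsPolicy O P σ) (z : Z) (α : Act) :
    IsObsPolicy O P (shiftPol σ z α) := by
  intro τ
  obtain ⟨h1, h2, h3⟩ := hσ (z, (α, τ.1) :: τ.2)
  exact ⟨h1, h2, fun α' hα' s hs => h3 α' hα' s (by rw [hs, myLastObs_cons])⟩

lemma mySuccB_belief (O : S → Z) (P : S → Act → S → ℝ) (hP : ∀ s α s', 0 ≤ P s α s')
    (b : S → ℝ) (hb : ∀ s, 0 ≤ b s) (α : Act) (z' : Z)
    (hpos : 0 < Pbo O P b α z') : IsBelief (succB O P b α z') := by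
  constructor
  · intro s
    unfold succB
    split_ifs
    · exact div_nonneg (Finset.sum_nonneg fun s' _ => mul_nonneg (hb s') (hP s' α s)) hpos.le
    · exact le_rfl
  · have h1 : ∑ s, succB O P b α z' s
        = (∑ s, if O s = z' then ∑ s' : S, b s' * P s' α s else 0) / Pbo O P b α z' := by
      rw [Finset.sum_div]
      refine Finset.sum_congr rfl fun s _ => ?_
      unfold succB
      split_ifs <;> simp
    have hnum : (∑ s, if O s = z' then ∑ s' : S, b s' * P s' α s else 0)
        = Pbo O P b α z' := by
      have hsw : ∀ s, (if O s = z' then ∑ s' : S, b s' * P s' α s else 0)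
          = ∑ s' : S, if O s = z' then b s' * P s' α s else 0 := by
        intro s; split_ifs <;> simp
      simp_rw [hsw]
      rw [Finset.sum_comm]
      unfold Pbo
      refine Finset.sum_congr rfl fun s' _ => ?_
      unfold Pso
      rw [Finset.mul_sum]
      refine Finset.sum_congr rfl fun s _ => ?_
      split_ifs <;> ring
    rw [h1, hnum, div_self hpos.ne']

lemma mySuccB_hasObs (O : S → Z) (P : S → Act → S → ℝ)
    (b : S → ℝ) (α : Act) (z' : Z) : HasObs O (succB O P b α z') z' := by
  intro s hs
  by_contra hc
  unfold succB at hs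
  rw [if_neg hc] at hs
  exact lt_irrefl _ hs

end myhelpers

set_option maxHeartbeats 1000000 in
/-- `n`-step cut-off under-approximation:
`∑_s b(s)·W_n^σ(s) ≤ V_n(b)`. -/
theorem stmt_15 {S Act Z : Type} [Fintype S] [Nonempty S] [Fintype Act] [Nonempty Act]
    [Fintype Z] [Nonempty Z]
    (O : S → Z) (P : S → Act → S → ℝ) (hM : IsPOMDP O P)
    (R : S → Act → S → ℝ) (G : Set S) (hG : ObservableGoal O G)
    (σ : Z × List (Act × Z) → Act → ℝ) (hσ : IsObsPolicy O P σ) (n : ℕ)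
    (b : S → ℝ) (z : Z) (hb : IsBelief b) (hobs : HasObs O b z) :
    ∑ s, b s * Wval O P R G n σ s ≤ Vopt O P R G n b z := by
  induction n generalizing σ b z with
  | zero => simp [Wval, Vopt]
  | succ n ih =>
    obtain ⟨hbnn, hbsum⟩ := hb
    obtain ⟨hP, hProw, hPne, hPobs⟩ := hM
    by_cases hgoal : ∀ s, 0 < b s → s ∈ G
    · simp only [Vopt, if_pos hgoal]
      apply le_of_eq
      apply Finset.sum_eq_zero
      intro s _
      rcases eq_or_lt_of_le (hbnn s) with h | h
      · rw [← h, zero_mul]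
      · simp only [Wval, if_pos (hgoal s h), mul_zero]
    · simp only [Vopt, if_neg hgoal]
      push_neg at hgoal
      obtain ⟨s₀, hs₀b, hs₀G⟩ := hgoal
      have hOs₀ : O s₀ = z := hobs s₀ hs₀b
      obtain ⟨Z', hZ'⟩ := hG
      have hzZ' : z ∉ Z' := fun h => hs₀G ((hZ' s₀).2 (by rw [hOs₀]; exact h))
      have hnotG : ∀ s, 0 < b s → s ∉ G := fun s hs hsG =>
        hzZ' (by rw [← hobs s hs]; exact (hZ' s).1 hsG)
      have hex : ∃ s, O s = z := ⟨s₀, hOs₀⟩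
      have hA : obsEnabled O P z = enabledA P s₀ := by
        rw [obsEnabled, dif_pos hex]
        exact hPobs _ _ (hex.choose_spec.trans hOs₀.symm)
      have hAne : (obsEnabled O P z).Nonempty := by rw [hA]; exact hPne s₀
      set A := obsEnabled O P z with hAdef
      -- Step 1: rewrite the LHS
      have hstep : ∀ s, b s * Wval O P R G (n+1) σ s =
          ∑ α ∈ A, b s * (σ (z, []) α *
            ∑ s' : S, P s α s' * (R s α s' + Wval O P R G n (shiftPol σ z α) s')) := by
        intro s
        rcases eq_or_lt_of_le (hbnn s) with h | h
        · rw [← h]; simp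
        · have hOz : O s = z := hobs s h
          have hAs : enabledA P s = A := by
            rw [hA]; exact hPobs s s₀ (hOz.trans hOs₀.symm)
          simp only [Wval, if_neg (hnotG s h), hOz, hAs, Finset.mul_sum]
      have hLHS : ∑ s, b s * Wval O P R G (n+1) σ s =
          ∑ α ∈ A, σ (z, []) α * ∑ s, b s *
            ∑ s' : S, P s α s' * (R s α s' + Wval O P R G n (shiftPol σ z α) s') := by
        rw [Finset.sum_congr rfl fun s _ => hstep s, Finset.sum_comm]
        refine Finset.sum_congr rfl fun α _ => ?_
        rw [Finset.mul_sum]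
        exact Finset.sum_congr rfl fun s _ => by ring
      rw [hLHS]
      -- Step 2: bound per action
      have key : ∀ α ∈ A, (∑ s, b s * ∑ s' : S, P s α s' *
            (R s α s' + Wval O P R G n (shiftPol σ z α) s')) ≤
          ∑ z' ∈ univ.filter (fun z' => 0 < Pbo O P b α z'),
            Pbo O P b α z' * (Rbel O P R b α z' +
              Vopt O P R G n (succB O P b α z') z') := by
        intro α _
        set σ' := shiftPol σ z α with hσ'def
        have hσ'pol : IsObsPolicy O P σ' := myShiftPol_isPolicy O P σ hσ z α
        set W := Wval O P R G n σ' with hWdef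
        calc ∑ s, b s * ∑ s' : S, P s α s' * (R s α s' + W s')
            = ∑ z' : Z, ∑ s, b s *
                ∑ s' : S, if O s' = z' then P s α s' * (R s α s' + W s') else 0 := by
              rw [Finset.sum_comm]
              refine Finset.sum_congr rfl fun s _ => ?_
              rw [← Finset.mul_sum]
              congr 1
              rw [Finset.sum_comm]
              refine Finset.sum_congr rfl fun s' _ => ?_
              simp
          _ ≤ ∑ z' : Z, (if 0 < Pbo O P b α z' then Pbo O P b α z' *
                (Rbel O P R b α z' + Vopt O P R G n (succB O P b α z') z') else 0) := by
              refine Finset.sum_le_sum fun z' _ => ?_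
              by_cases hpos : 0 < Pbo O P b α z'
              · rw [if_pos hpos]
                have hne : Pbo O P b α z' ≠ 0 := hpos.ne'
                have hIH := ih σ' hσ'pol (succB O P b α z') z'
                  (mySuccB_belief O P hP b hbnn α z' hpos)
                  (mySuccB_hasObs O P b α z')
                have h0 : ∀ s : S,
                    (∑ s' : S, if O s' = z' then P s α s' * (R s α s' + W s') else 0)
                    = (∑ s' : S, if O s' = z' then R s α s' * P s α s' else 0)
                      + ∑ s' : S, if O s' = z' then P s α s' * W s' else 0 := by
                  intro s
                  rw [← Finset.sum_add_distrib]
                  refine Finset.sum_congr rfl fun s' _ => ?_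
                  split_ifs <;> ring
                have h1 : Pbo O P b α z' * Rbel O P R b α z'
                    = ∑ s, b s * ∑ s' : S, if O s' = z' then R s α s' * P s α s' else 0 := by
                  unfold Rbel
                  rw [mul_comm, div_mul_cancel₀ _ hne]
                have h2 : (∑ s, b s * ∑ s' : S, if O s' = z' then P s α s' * W s' else 0)
                    = Pbo O P b α z' * ∑ s' : S, succB O P b α z' s' * W s' := by
                  have hpull : ∀ s, b s * (∑ s' : S, if O s' = z' then P s α s' * W s' else 0)
                      = ∑ s' : S, if O s' = z' then b s * P s α s' * W s' else 0 := by
                    intro s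
                    rw [Finset.mul_sum]
                    refine Finset.sum_congr rfl fun s' _ => ?_
                    split_ifs <;> ring
                  simp_rw [hpull]
                  rw [Finset.sum_comm, Finset.mul_sum]
                  refine Finset.sum_congr rfl fun s' _ => ?_
                  unfold succB
                  by_cases hc : O s' = z'
                  · simp only [if_pos hc, ← Finset.sum_mul]
                    have hfld : Pbo O P b α z' *
                        ((∑ s'' : S, b s'' * P s'' α s') / Pbo O P b α z' * W s')
                        = (∑ s'' : S, b s'' * P s'' α s') * W s' := by
                      field_simp
                    rw [hfld]
                  · simp [hc]
                calc ∑ s, b s * ∑ s' : S, (if O s' = z' then P s α s' * (R s α s' + W s') else 0)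
                    = (∑ s, b s * ∑ s' : S, if O s' = z' then R s α s' * P s α s' else 0)
                      + ∑ s, b s * ∑ s' : S, if O s' = z' then P s α s' * W s' else 0 := by
                      rw [← Finset.sum_add_distrib]
                      refine Finset.sum_congr rfl fun s _ => ?_
                      rw [h0 s, mul_add]
                  _ = Pbo O P b α z' * Rbel O P R b α z'
                      + Pbo O P b α z' * ∑ s' : S, succB O P b α z' s' * W s' := by
                      rw [h1, h2]
                  _ ≤ Pbo O P b α z' * Rbel O P R b α z'
                      + Pbo O P b α z' * Vopt O P R G n (succB O P b α z') z' :=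
                      add_le_add le_rfl (mul_le_mul_of_nonneg_left hIH hpos.le)
                  _ = Pbo O P b α z' * (Rbel O P R b α z'
                      + Vopt O P R G n (succB O P b α z') z') := (mul_add _ _ _).symm
              · rw [if_neg hpos]
                have hPbo0 : Pbo O P b α z' = 0 :=
                  le_antisymm (not_lt.mp hpos) (myPbo_nonneg O P hP b hbnn α z')
                have hPso0 : ∀ s, 0 < b s → ∀ s', O s' = z' → P s α s' = 0 := by
                  intro s hs s' hOs'
                  unfold Pbo at hPbo0
                  have h2 := (Finset.sum_eq_zero_iff_of_nonneg fun s _ =>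
                    mul_nonneg (hbnn s) (myPso_nonneg O P hP s α z')).mp hPbo0 s (mem_univ s)
                  have h3 : Pso O P s α z' = 0 := by
                    rcases mul_eq_zero.mp h2 with h | h
                    · exact absurd h hs.ne'
                    · exact h
                  unfold Pso at h3
                  have h4 := (Finset.sum_eq_zero_iff_of_nonneg fun s'' _ => by
                    split_ifs with hh
                    · exact hP s α s''
                    · exact le_rfl).mp h3 s' (mem_univ s')
                  rw [if_pos hOs'] at h4
                  exact h4
                apply le_of_eq
                apply Finset.sum_eq_zero
                intro s _
                rcases eq_or_lt_of_le (hbnn s) with h | h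
                · rw [← h, zero_mul]
                · rw [mul_eq_zero]
                  right
                  apply Finset.sum_eq_zero
                  intro s' _
                  by_cases hc : O s' = z'
                  · rw [if_pos hc, hPso0 s h s' hc, zero_mul]
                  · rw [if_neg hc]
          _ = ∑ z' ∈ univ.filter (fun z' => 0 < Pbo O P b α z'),
                Pbo O P b α z' * (Rbel O P R b α z' +
                  Vopt O P R G n (succB O P b α z') z') :=
              (Finset.sum_filter _ _).symm
      -- Step 3: convexity
      have hσ1 := hσ (z, [])
      have hlast : lastObs (z, ([] : List (Act × Z))) = z := rfl
      have hsupp : ∀ α, σ (z, []) α ≠ 0 → α ∈ A := by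
        intro α hα
        rw [hA]
        exact hσ1.2.2 α hα s₀ (by rw [hlast, hOs₀])
      have hsum1 : ∑ α ∈ A, σ (z, []) α = 1 := by
        rw [← hσ1.2.1]
        exact Finset.sum_subset (Finset.subset_univ A) fun α _ hα =>
          by_contra fun h => hα (hsupp α h)
      rw [maxOver, dif_pos hAne]
      set M := A.sup' hAne (fun α =>
        ∑ z' ∈ univ.filter (fun z' => 0 < Pbo O P b α z'),
          Pbo O P b α z' * (Rbel O P R b α z' +
            Vopt O P R G n (succB O P b α z') z')) with hMdef
      calc ∑ α ∈ A, σ (z, []) α * ∑ s, b s *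
              ∑ s' : S, P s α s' * (R s α s' + Wval O P R G n (shiftPol σ z α) s')
          ≤ ∑ α ∈ A, σ (z, []) α * M := by
            refine Finset.sum_le_sum fun α hα => ?_
            refine mul_le_mul_of_nonneg_left ?_ (hσ1.1 α)
            rw [hMdef]
            exact le_trans (key α hα) (Finset.le_sup' (fun α =>
              ∑ z' ∈ univ.filter (fun z' => 0 < Pbo O P b α z'),
                Pbo O P b α z' * (Rbel O P R b α z' +
                  Vopt O P R G n (succB O P b α z') z')) hα)
        _ = M := by rw [← Finset.sum_mul, hsum1, one_mul]
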